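/- arXiv:math/0310446 — 2 statements merged into one kernel-verified Lean document; each statement's English description precedes it below -/
import Mathlib

section
/- Let K be a field, n ≥ 2, and let C be an n×n matrix over K that is strictly upper triangular (C i j = 0 whenever i ≥ j) and whose superdiagonal entries are all nonzero (C i (i+1) ≠ 0 for all i with i+1 ≤ n−1). Let B be a symmetric n×n matrix over K such that BC is symmetric. Then B vanishes strictly above the anti-diagonal: B i j = 0 whenever i + j < n − 1 (indices running from 0 to n−1). -/
open Matrix

/-- If `C` is strictly upper triangular with nonzero superdiagonal entries and `B` is
symmetric with `B * C` symmetric, then `B` vanishes strictly above the anti-diagonal. -/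
theorem stmt_1 {K : Type*} [Field K] {n : ℕ} (hn : 2 ≤ n)
    (B C : Matrix (Fin n) (Fin n) K)
    (hCtri : ∀ i j : Fin n, (j : ℕ) ≤ (i : ℕ) → C i j = 0)
    (hCsd : ∀ i : Fin n, ∀ h : (i : ℕ) + 1 < n, C i ⟨(i : ℕ) + 1, h⟩ ≠ 0)
    (hB : Bᵀ = B) (hBC : (B * C)ᵀ = B * C) :
    ∀ i j : Fin n, (i : ℕ) + (j : ℕ) < n - 1 → B i j = 0 := by
  have key : ∀ m : ℕ, ∀ i j : Fin n, (i : ℕ) * n + (j : ℕ) = m →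
      (i : ℕ) + (j : ℕ) < n - 1 → B i j = 0 := by
    intro m
    induction m using Nat.strong_induction_on with
    | _ m ih =>
      intro i j hm hij
      have hj1 : (j : ℕ) + 1 < n := by omega
      set j' : Fin n := ⟨(j : ℕ) + 1, hj1⟩ with hj'def
      have hsym := congrFun (congrFun hBC i) j'
      simp only [transpose_apply, mul_apply] at hsym
      -- hsym : ∑ k, B j' k * C k i = ∑ k, B i k * C k j'
      have hL : ∑ k, B j' k * C k i = 0 := by
        apply Finset.sum_eq_zero
        intro k _
        by_cases hk : (k : ℕ) < (i : ℕ)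
        · have hBsym : B j' k = B k j' := by
            have := congrFun (congrFun hB k) j'
            simpa [transpose_apply] using this
          have hmeas : (k : ℕ) * n + (j' : ℕ) < m := by
            have hkn : (k : ℕ) * n + n ≤ (i : ℕ) * n := by
              have h1 : (k : ℕ) + 1 ≤ (i : ℕ) := hk
              calc (k : ℕ) * n + n = ((k : ℕ) + 1) * n := by ring
                _ ≤ (i : ℕ) * n := Nat.mul_le_mul_right n h1
            simp only [hj'def]
            omega
          have hzero : B k j' = 0 := by
            apply ih _ hmeas k j' rfl
            simp only [hj'def]
            omega
          rw [hBsym, hzero, zero_mul]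
        · rw [hCtri k i (by omega), mul_zero]
      have hR : ∑ k, B i k * C k j' = B i j * C j j' := by
        apply Finset.sum_eq_single_of_mem j (Finset.mem_univ j)
        intro k _ hne
        have hne' : (k : ℕ) ≠ (j : ℕ) := fun h => hne (Fin.ext h)
        by_cases hk : (k : ℕ) < (j : ℕ)
        · have hmeas : (i : ℕ) * n + (k : ℕ) < m := by omega
          have hzero : B i k = 0 := ih _ hmeas i k rfl (by omega)
          rw [hzero, zero_mul]
        · rw [hCtri k j' (by simp only [hj'def]; omega), mul_zero]
      rw [hL, hR] at hsym
      have hCne : C j j' ≠ 0 := hCsd j hj1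
      rcases mul_eq_zero.mp hsym.symm with h | h
      · exact h
      · exact absurd h hCne
  intro i j hij
  exact key ((i : ℕ) * n + (j : ℕ)) i j rfl hij
end

section
/- Let K be a field, n ≥ 2, and let C be an n×n matrix over K that is strictly upper triangular (C i j = 0 whenever i ≥ j) with all superdiagonal entries nonzero (C i (i+1) ≠ 0 for all i with i+1 ≤ n−1). Let B be a symmetric invertible n×n matrix over K such that BC is symmetric. Then every anti-diagonal entry of B is nonzero: B i (n−1−i) ≠ 0 for every index i. -/
open Matrix

/-- If `C` is strictly upper triangular with nonzero superdiagonal entries and `B` is a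
symmetric invertible matrix with `B * C` symmetric, then every anti-diagonal entry of `B`
is nonzero. -/
theorem stmt_2 {K : Type*} [Field K] {n : ℕ} (hn : 2 ≤ n)
    (B C : Matrix (Fin n) (Fin n) K)
    (hCtri : ∀ i j : Fin n, (j : ℕ) ≤ (i : ℕ) → C i j = 0)
    (hCsd : ∀ i : Fin n, ∀ h : (i : ℕ) + 1 < n, C i ⟨(i : ℕ) + 1, h⟩ ≠ 0)
    (hB : Bᵀ = B) (hBinv : IsUnit B) (hBC : (B * C)ᵀ = B * C) :
    ∀ i : Fin n, B i i.rev ≠ 0 := by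
  have hBsymm : ∀ a b : Fin n, B a b = B b a := fun a b =>
    congrFun (congrFun hB b) a
  -- key vanishing claim: strictly above the anti-diagonal, B vanishes
  have key : ∀ m : ℕ, ∀ i j : Fin n, (n + 1) * ((i : ℕ) + j) + i = m →
      (i : ℕ) + j + 1 < n → B i j = 0 := by
    intro m
    induction m using Nat.strong_induction_on with
    | _ m IH =>
      intro i j hm hlt
      have hj1 : (j : ℕ) + 1 < n := by omega
      set x : Fin n := ⟨(j : ℕ) + 1, hj1⟩ with hx
      have hxv : (x : ℕ) = (j : ℕ) + 1 := rfl
      have heq : ∑ k, B i k * C k x = ∑ k, B x k * C k i := by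
        have := congrFun (congrFun hBC x) i
        simpa [Matrix.transpose_apply, Matrix.mul_apply] using this
      have hLHS : ∑ k, B i k * C k x = B i j * C j x := by
        apply Finset.sum_eq_single
        · intro k _ hk
          rcases lt_or_ge (k : ℕ) (j : ℕ) with h | h
          · have : B i k = 0 := by
              refine IH ((n + 1) * ((i : ℕ) + k) + i) ?_ i k rfl (by omega)
              have h1 : (n + 1) * ((i : ℕ) + k + 1) = (n + 1) * ((i : ℕ) + k) + (n + 1) := by
                ring
              have h2 : (n + 1) * ((i : ℕ) + k + 1) ≤ (n + 1) * ((i : ℕ) + j) :=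
                Nat.mul_le_mul_left _ (by omega)
              omega
            simp [this]
          · have hkj : (j : ℕ) < (k : ℕ) := by
              rcases Nat.eq_or_lt_of_le h with h' | h'
              · exact absurd (Fin.ext h'.symm) hk
              · exact h'
            have : C k x = 0 := hCtri k x (by simpa [hx] using hkj)
            simp [this]
        · intro h
          exact absurd (Finset.mem_univ j) h
      have hRHS : ∑ k, B x k * C k i = 0 := by
        apply Finset.sum_eq_zero
        intro k _
        rcases lt_or_ge (k : ℕ) (i : ℕ) with h | h
        · have : B x k = 0 := by
            rw [hBsymm]
            refine IH ((n + 1) * ((k : ℕ) + x) + k) ?_ k x rfl ?_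
            · have h2 : (n + 1) * ((k : ℕ) + x) ≤ (n + 1) * ((i : ℕ) + j) :=
                Nat.mul_le_mul_left _ (by omega)
              omega
            · omega
          simp [this]
        · have : C k i = 0 := hCtri k i h
          simp [this]
      have hCj : C j x ≠ 0 := hCsd j hj1
      have : B i j * C j x = 0 := by rw [← hLHS, heq, hRHS]
      exact (mul_eq_zero.mp this).resolve_right hCj
  have hzero : ∀ i j : Fin n, (i : ℕ) + j + 1 < n → B i j = 0 :=
    fun i j h => key _ i j rfl h
  -- determinant reduces to the anti-diagonal term
  have hdet : B.det ≠ 0 :=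
    isUnit_iff_ne_zero.mp ((Matrix.isUnit_iff_isUnit_det B).mp hBinv)
  have hprod : ∀ σ : Equiv.Perm (Fin n), σ ≠ Fin.revPerm → ∏ i, B (σ i) i = 0 := by
    intro σ hσ
    by_contra hne
    have hall : ∀ i : Fin n, (Fin.rev i : ℕ) ≤ (σ i : ℕ) := by
      intro i
      by_contra hlt
      push_neg at hlt
      have hrev : (Fin.rev i : ℕ) = n - ((i : ℕ) + 1) := Fin.val_rev i
      have : B (σ i) i = 0 := hzero _ _ (by omega)
      exact hne (Finset.prod_eq_zero (Finset.mem_univ i) this)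
    have hsum1 : ∑ i, (σ i : ℕ) = ∑ i : Fin n, (i : ℕ) :=
      Equiv.sum_comp σ (fun i => (i : ℕ))
    have hsum2 : ∑ i, (Fin.rev i : ℕ) = ∑ i : Fin n, (i : ℕ) :=
      Equiv.sum_comp Fin.revPerm (fun i => (i : ℕ))
    obtain ⟨i0, hi0⟩ : ∃ i, σ i ≠ Fin.rev i := by
      by_contra hc
      push_neg at hc
      exact hσ (Equiv.ext fun i => hc i)
    have hi0' : (Fin.rev i0 : ℕ) < (σ i0 : ℕ) :=
      lt_of_le_of_ne (hall i0) (fun h => hi0 (Fin.ext h.symm))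
    have : ∑ i, (Fin.rev i : ℕ) < ∑ i, (σ i : ℕ) :=
      Finset.sum_lt_sum (fun i _ => hall i) ⟨i0, Finset.mem_univ i0, hi0'⟩
    omega
  have hdet_eq : B.det = Equiv.Perm.sign (Fin.revPerm (n := n)) • ∏ i, B (Fin.rev i) i := by
    rw [Matrix.det_apply]
    refine Finset.sum_eq_single Fin.revPerm ?_ ?_
    · intro σ _ hσ
      rw [hprod σ hσ, smul_zero]
    · intro h
      exact absurd (Finset.mem_univ _) h
  have hprodne : (∏ i, B (Fin.rev i) i) ≠ 0 := by
    intro h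
    rw [hdet_eq, h, smul_zero] at hdet
    exact hdet rfl
  intro i
  have := Finset.prod_ne_zero_iff.mp hprodne (Fin.rev i) (Finset.mem_univ _)
  rwa [Fin.rev_rev] at this
end
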